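/- Let Z be a finite set of size m, p₀ a strictly positive pmf on Z, and pₙ a sequence of pmfs on Z with δₙ = √n (pₙ - p₀) convergent and M = sup_n max_{z∈Z} |δₙ(z)| < ∞. If Z₁,…,Zₙ are i.i.d. with pmf p₀ and ℓₙ(pₙ; p₀) = Σ_{i=1}^n log(pₙ(Zᵢ)/p₀(Zᵢ)), then E[exp(2 ℓₙ(pₙ; p₀))] = ∏_{i=1}^n (1 + Σ_{z∈Z} δₙ(z)²/(n p₀(z))) ≤ exp(Σ_{z∈Z} M²/p₀(z)), so that sup_n E[exp(2 ℓₙ(pₙ; p₀))] < ∞. -/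

import Mathlib

open MeasureTheory
open scoped BigOperators

/-- The measure on a finite set induced by a probability mass function. -/
noncomputable def pmfMeasure {Z : Type*} [Fintype Z] [MeasurableSpace Z] (p : Z → ℝ) :
    Measure Z :=
  ∑ z : Z, (ENNReal.ofReal (p z)) • Measure.dirac z

lemma pmfMeasure_finite {Z : Type*} [Fintype Z] [MeasurableSpace Z] (p : Z → ℝ) :
    IsFiniteMeasure (pmfMeasure p) := by
  constructor
  rw [pmfMeasure]
  simp only [Measure.finset_sum_apply, Measure.smul_apply, smul_eq_mul]
  refine ENNReal.sum_lt_top.2 fun z _ => ?_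
  exact ENNReal.mul_lt_top ENNReal.ofReal_lt_top (measure_lt_top _ _)

lemma integral_pmfMeasure {Z : Type*} [Fintype Z] [MeasurableSpace Z]
    [MeasurableSingletonClass Z] (p : Z → ℝ) (hp : ∀ z, 0 ≤ p z) (f : Z → ℝ) :
    ∫ x, f x ∂(pmfMeasure p) = ∑ z, p z * f z := by
  rw [pmfMeasure, integral_finset_sum_measure ?_]
  · refine Finset.sum_congr rfl fun z _ => ?_
    rw [integral_smul_measure, integral_dirac, ENNReal.toReal_ofReal (hp z), smul_eq_mul]
  · intro z _
    have : IsFiniteMeasure ((ENNReal.ofReal (p z)) • Measure.dirac z) := by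
      constructor
      simp only [Measure.smul_apply, smul_eq_mul]
      exact ENNReal.mul_lt_top ENNReal.ofReal_lt_top (measure_lt_top _ _)
    exact Integrable.of_finite

theorem stmt_3 {Z : Type*} [Fintype Z] [MeasurableSpace Z] [MeasurableSingletonClass Z]
    (p₀ : Z → ℝ) (hp₀pos : ∀ z, 0 < p₀ z) (hp₀sum : ∑ z, p₀ z = 1)
    (p : ℕ → Z → ℝ) (hpnn : ∀ n z, 0 ≤ p n z) (hpsum : ∀ n, ∑ z, p n z = 1)
    (δ : ℕ → Z → ℝ) (hδ : ∀ n z, δ n z = Real.sqrt n * (p n z - p₀ z))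
    (δlim : Z → ℝ) (hδconv : Filter.Tendsto δ Filter.atTop (nhds δlim))
    (M : ℝ) (hM : ∀ n z, |δ n z| ≤ M) :
    (∀ n : ℕ,
      (∫ ω, ∏ i : Fin n, (p n (ω i) / p₀ (ω i)) ^ 2
          ∂(Measure.pi fun _ : Fin n => pmfMeasure p₀))
        = (1 + ∑ z, (δ n z) ^ 2 / (n * p₀ z)) ^ n ∧
      (1 + ∑ z, (δ n z) ^ 2 / (n * p₀ z)) ^ n ≤ Real.exp (∑ z, M ^ 2 / p₀ z)) ∧
    ∃ C : ℝ, ∀ n : ℕ,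
      (∫ ω, ∏ i : Fin n, (p n (ω i) / p₀ (ω i)) ^ 2
          ∂(Measure.pi fun _ : Fin n => pmfMeasure p₀)) ≤ C := by
  haveI : Nonempty Z := by
    rcases isEmpty_or_nonempty Z with h | h
    · rw [Finset.univ_eq_empty, Finset.sum_empty] at hp₀sum; norm_num at hp₀sum
    · exact h
  letI : MeasureSpace Z := ⟨pmfMeasure p₀⟩
  haveI : IsFiniteMeasure (volume : Measure Z) := pmfMeasure_finite p₀
  have key : ∀ n : ℕ,
      (∫ ω, ∏ i : Fin n, (p n (ω i) / p₀ (ω i)) ^ 2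
          ∂(Measure.pi fun _ : Fin n => pmfMeasure p₀))
        = (1 + ∑ z, (δ n z) ^ 2 / (n * p₀ z)) ^ n ∧
      (1 + ∑ z, (δ n z) ^ 2 / (n * p₀ z)) ^ n ≤ Real.exp (∑ z, M ^ 2 / p₀ z) := by
    intro n
    set S : ℝ := ∑ z, (δ n z) ^ 2 / (n * p₀ z) with hS
    have hSnonneg : 0 ≤ S := by
      refine Finset.sum_nonneg fun z _ => div_nonneg (sq_nonneg _) ?_
      exact mul_nonneg (Nat.cast_nonneg n) (hp₀pos z).le
    have hMnonneg : 0 ≤ M := le_trans (abs_nonneg _) (hM 0 (Classical.arbitrary Z))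
    constructor
    · have h1 : (∫ ω, ∏ i : Fin n, (p n (ω i) / p₀ (ω i)) ^ 2
          ∂(Measure.pi fun _ : Fin n => pmfMeasure p₀))
          = ∏ i : Fin n, ∫ x, (p n x / p₀ x) ^ 2 ∂(pmfMeasure p₀) := by
        exact MeasureTheory.integral_fintype_prod_eq_prod
          (fun _ x => (p n x / p₀ x) ^ 2)
      rw [h1, Finset.prod_const, Finset.card_univ, Fintype.card_fin]
      rcases Nat.eq_zero_or_pos n with hn | hn
      · simp [hn]
      · congr 1
        rw [integral_pmfMeasure p₀ (fun z => (hp₀pos z).le)]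
        have hterm : ∀ z, p₀ z * (p n z / p₀ z) ^ 2
            = (2 * p n z - p₀ z) + (δ n z) ^ 2 / (n * p₀ z) := by
          intro z
          have hδ2 : (δ n z) ^ 2 = n * (p n z - p₀ z) ^ 2 := by
            rw [hδ, mul_pow, Real.sq_sqrt (Nat.cast_nonneg n)]
          have hp₀ne : p₀ z ≠ 0 := (hp₀pos z).ne'
          have hnne : (n : ℝ) ≠ 0 := Nat.cast_ne_zero.2 hn.ne'
          rw [hδ2]
          field_simp
          ring
        rw [Finset.sum_congr rfl (fun z _ => hterm z), Finset.sum_add_distrib,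
          Finset.sum_sub_distrib, ← Finset.mul_sum, hpsum, hp₀sum]
        norm_num
        exact hS.symm
    · have h2 : (1 + S) ^ n ≤ (Real.exp S) ^ n := by
        apply pow_le_pow_left₀ (by linarith) (by linarith [Real.add_one_le_exp S])
      have h3 : (Real.exp S) ^ n = Real.exp (n * S) := by
        rw [← Real.exp_nat_mul]
      have h4 : (n : ℝ) * S ≤ ∑ z, M ^ 2 / p₀ z := by
        rw [Finset.mul_sum]
        refine Finset.sum_le_sum fun z _ => ?_
        rcases Nat.eq_zero_or_pos n with hn | hn
        · simp only [hn, Nat.cast_zero, zero_mul]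
          exact div_nonneg (sq_nonneg M) (hp₀pos z).le
        · have hnne : (n : ℝ) ≠ 0 := Nat.cast_ne_zero.2 hn.ne'
          have heq : (n : ℝ) * ((δ n z) ^ 2 / (n * p₀ z)) = (δ n z) ^ 2 / p₀ z := by
            rw [← mul_div_assoc, mul_div_mul_left _ _ hnne]
          have hnum : (δ n z) ^ 2 ≤ M ^ 2 := by
            calc (δ n z) ^ 2 = |δ n z| ^ 2 := (sq_abs _).symm
              _ ≤ M ^ 2 := pow_le_pow_left₀ (abs_nonneg _) (hM n z) 2
          rw [heq]
          gcongr
          exact (hp₀pos z).le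
      calc (1 + S) ^ n ≤ Real.exp ((n : ℝ) * S) := h2.trans_eq h3
        _ ≤ Real.exp (∑ z, M ^ 2 / p₀ z) := Real.exp_le_exp.2 h4
  exact ⟨key, ⟨Real.exp (∑ z, M ^ 2 / p₀ z),
    fun n => (key n).1.le.trans (key n).2⟩⟩
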